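/- Let I(r) = √3·∫_r¹ dξ/√(1-ξ³) and, for K > 0, define f_K(r) = (I(r))⁶·(1 - (1+K)r³) on the interval (L₀^M, 1), where L₀^M = (1/(1+K))^{1/3}. Then f_K < 0 on (L₀^M, 1), f_K(r) → 0 as r → (L₀^M)⁺ and as r → 1⁻, and f_K has exactly one critical point in (L₀^M, 1) (its unique minimum point). -/

import Mathlib

open intervalIntegral Set MeasureTheory Filter

noncomputable def Ifun : ℝ → ℝ :=
  fun r => Real.sqrt 3 * ∫ ξ in r..1, 1 / Real.sqrt (1 - ξ^3)

namespace S17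

noncomputable def g : ℝ → ℝ := fun ξ => 1 / Real.sqrt (1 - ξ^3)

lemma g_meas : Measurable g := by
  have h : Measurable fun ξ : ℝ => Real.sqrt (1 - ξ^3) :=
    (Real.continuous_sqrt.comp (by continuity)).measurable
  exact measurable_const.div h

lemma cube_lt_one {ξ : ℝ} (h : ξ < 1) : ξ^3 < 1 := by
  nlinarith [sq_nonneg (2*ξ + 1), sq_nonneg ξ]

lemma g_pos {ξ : ℝ} (h : ξ < 1) : 0 < g ξ := by
  have : (0:ℝ) < 1 - ξ^3 := by linarith [cube_lt_one h]
  exact div_pos one_pos (Real.sqrt_pos.2 this)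

lemma g_nonneg (ξ : ℝ) : 0 ≤ g ξ := by
  unfold g; positivity

lemma g_contAt {ξ : ℝ} (h : ξ < 1) : ContinuousAt g ξ := by
  have h1 : (0:ℝ) < 1 - ξ^3 := by linarith [cube_lt_one h]
  have hne : Real.sqrt (1 - ξ^3) ≠ 0 := (Real.sqrt_pos.2 h1).ne'
  exact continuousAt_const.div
    (Real.continuous_sqrt.continuousAt.comp (by fun_prop)) hne

lemma g_intble {a : ℝ} (ha : 0 ≤ a) (ha1 : a ≤ 1) : IntervalIntegrable g volume a 1 := by
  have hm : IntervalIntegrable (fun x : ℝ => (1 - x) ^ (-(1/2) : ℝ)) volume a 1 := by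
    have h0 : IntervalIntegrable (fun x : ℝ => x ^ (-(1/2) : ℝ)) volume (1 - a) (1 - 1) :=
      intervalIntegrable_rpow' (by norm_num)
    simpa using h0.comp_sub_left 1
  refine hm.mono_fun' (g_meas.aestronglyMeasurable.restrict) ?_
  rw [EventuallyLE, ae_restrict_iff' measurableSet_uIoc]
  filter_upwards with x hx
  rw [uIoc_of_le ha1] at hx
  obtain ⟨hx1, hx2⟩ := hx
  have hx0 : 0 < x := lt_of_le_of_lt ha hx1
  have h1x : (0:ℝ) ≤ 1 - x := by linarith
  have key : 1 - x ≤ 1 - x^3 := by nlinarith [mul_nonneg (mul_nonneg hx0.le h1x) (by linarith : (0:ℝ) ≤ 1 + x)]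
  have hsq : Real.sqrt (1 - x) ≤ Real.sqrt (1 - x^3) := Real.sqrt_le_sqrt key
  have hrw : (1 - x) ^ (-(1/2) : ℝ) = 1 / Real.sqrt (1 - x) := by
    rw [Real.rpow_neg h1x, ← Real.sqrt_eq_rpow, one_div]
  rw [hrw, Real.norm_eq_abs, abs_of_nonneg (g_nonneg x)]
  rcases eq_or_lt_of_le hx2 with h | h
  · subst h
    norm_num [g]
  · exact one_div_le_one_div_of_le (Real.sqrt_pos.2 (by linarith)) hsq


lemma Ifun_hasDerivAt {r : ℝ} (h0 : 0 < r) (h1 : r < 1) :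
    HasDerivAt Ifun (Real.sqrt 3 * (-(g r))) r := by
  have hi := g_intble h0.le h1.le
  have hd : HasDerivAt (fun u => ∫ ξ in u..1, g ξ) (-(g r)) r :=
    intervalIntegral.integral_hasDerivAt_left hi
      g_meas.stronglyMeasurable.stronglyMeasurableAtFilter (g_contAt h1)
  exact hd.const_mul (Real.sqrt 3)

lemma Ifun_pos {r : ℝ} (h0 : 0 ≤ r) (h1 : r < 1) : 0 < Ifun r := by
  have : 0 < ∫ ξ in r..1, g ξ :=
    intervalIntegral_pos_of_pos_on (g_intble h0 h1.le) (fun x hx => g_pos hx.2) h1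
  exact mul_pos (Real.sqrt_pos.2 (by norm_num)) this

lemma Ifun_lt {r s : ℝ} (h0 : 0 ≤ r) (hrs : r < s) (hs : s ≤ 1) : Ifun s < Ifun r := by
  have h0s : 0 ≤ s := h0.trans hrs.le
  have hint1 : IntervalIntegrable g volume r 1 := g_intble h0 (hrs.le.trans hs)
  have hint2 : IntervalIntegrable g volume s 1 := g_intble h0s hs
  have hint3 : IntervalIntegrable g volume r s :=
    hint1.mono_set (Set.uIcc_subset_uIcc (by simp [Set.uIcc_of_le, hrs.le.trans hs, h0, hrs.le]) (by
      simp [Set.mem_uIcc]; left; exact ⟨hrs.le, hs⟩))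
  have hadd : (∫ ξ in r..s, g ξ) + ∫ ξ in s..1, g ξ = ∫ ξ in r..1, g ξ :=
    intervalIntegral.integral_add_adjacent_intervals hint3 hint2
  have hpos : 0 < ∫ ξ in r..s, g ξ :=
    intervalIntegral_pos_of_pos_on hint3 (fun x hx => g_pos (hx.2.trans_le hs)) hrs
  have hlt : (∫ ξ in s..1, g ξ) < ∫ ξ in r..1, g ξ := by linarith
  have h3 : (0:ℝ) < Real.sqrt 3 := Real.sqrt_pos.2 (by norm_num)
  exact mul_lt_mul_of_pos_left hlt h3

lemma Ifun_one : Ifun 1 = 0 := by simp [Ifun]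

lemma Ifun_contOn : ContinuousOn Ifun (Set.Icc 0 1) := by
  have hint : IntegrableOn g (Set.uIcc 0 1) := by
    rw [Set.uIcc_of_le (by norm_num : (0:ℝ) ≤ 1)]
    exact (intervalIntegrable_iff_integrableOn_Icc_of_le (by norm_num)).mp
      (g_intble (by norm_num) (by norm_num))
  have hc : ContinuousOn (fun x => ∫ t in x..1, g t) (Set.uIcc 0 1) :=
    intervalIntegral.continuousOn_primitive_interval_left hint
  have : ContinuousOn Ifun (Set.uIcc 0 1) := continuousOn_const.mul hc
  simpa [Set.uIcc_of_le (by norm_num : (0:ℝ) ≤ 1)] using this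

end S17
section Part2
open intervalIntegral Set MeasureTheory Filter S17

namespace S17

noncomputable def Dv : ℝ → ℝ := fun r => Real.sqrt 3 * (-(g r))

lemma sqrt3_pos : (0:ℝ) < Real.sqrt 3 := Real.sqrt_pos.2 (by norm_num)

lemma Dv_neg {r : ℝ} (h1 : r < 1) : Dv r < 0 := by
  have := g_pos h1
  unfold Dv
  nlinarith [sqrt3_pos]

lemma g_lt {r s : ℝ} (hrs : r < s) (hs : s < 1) : g r < g s := by
  have h1 : (0:ℝ) < 1 - s^3 := by linarith [cube_lt_one hs]
  have h2 : 1 - s^3 < 1 - r^3 := by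
    have h3 := (Odd.strictMono_pow (R := ℝ) (by decide : Odd 3)) hrs
    simp only at h3
    linarith
  have hsq : Real.sqrt (1 - s^3) < Real.sqrt (1 - r^3) := Real.sqrt_lt_sqrt h1.le h2
  exact one_div_lt_one_div_of_lt (Real.sqrt_pos.2 h1) hsq

lemma Dv_lt {r s : ℝ} (hrs : r < s) (hs : s < 1) : Dv s < Dv r := by
  have := g_lt hrs hs
  unfold Dv
  nlinarith [sqrt3_pos]

noncomputable def w1 : ℝ → ℝ := fun r => 2 * Dv r / Ifun r

noncomputable def w2 (a : ℝ) : ℝ → ℝ := fun r => a * r^2 / (1 - a * r^3)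

lemma w1_lt {r s : ℝ} (h0 : 0 < r) (hrs : r < s) (hs : s < 1) : w1 s < w1 r := by
  have hIr : 0 < Ifun r := Ifun_pos h0.le (hrs.trans hs)
  have hIs : 0 < Ifun s := Ifun_pos (h0.trans hrs).le hs
  have hIlt : Ifun s < Ifun r := Ifun_lt h0.le hrs hs.le
  have hD : Dv s < Dv r := Dv_lt hrs hs
  have hDr : Dv r < 0 := Dv_neg (hrs.trans hs)
  rw [w1, w1, div_lt_div_iff₀ hIs hIr]
  nlinarith

lemma w2_lt {a r s : ℝ} (h0 : 0 < r) (hrs : r < s) (hra : 1 < a * r^3) (hsa : 1 < a * s^3) :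
    w2 a r < w2 a s := by
  have ha : 0 < a := by nlinarith [pow_pos h0 3]
  have hr' : (0:ℝ) < a * r^3 - 1 := by linarith
  have hs' : (0:ℝ) < a * s^3 - 1 := by linarith
  have key : a * s^2 * (a * r^3 - 1) < a * r^2 * (a * s^3 - 1) := by
    nlinarith [mul_pos (mul_pos ha h0) (sub_pos.2 hrs), sq_nonneg r, sq_nonneg s,
      mul_pos (mul_pos (mul_pos ha ha) (mul_pos (mul_pos h0 h0) (mul_pos (h0.trans hrs) (h0.trans hrs)))) (sub_pos.2 hrs)]
  have h1 : w2 a r = -(a * r^2 / (a * r^3 - 1)) := by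
    rw [w2]; rw [show (1 - a * r^3) = -(a * r^3 - 1) by ring, div_neg]
  have h2 : w2 a s = -(a * s^2 / (a * s^3 - 1)) := by
    rw [w2]; rw [show (1 - a * s^3) = -(a * s^3 - 1) by ring, div_neg]
  rw [h1, h2, neg_lt_neg_iff, div_lt_div_iff₀ hs' hr']
  linarith

end S17
end Part2
section Part3
open intervalIntegral Set MeasureTheory Filter S17

namespace S17

lemma cube_lt_cube {r s : ℝ} (h : r < s) : r^3 < s^3 :=
  (Odd.strictMono_pow (R := ℝ) (by decide : Odd 3)) h

end S17

set_option maxHeartbeats 1000000 in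
theorem stmt_17 (K : ℝ) (hK : 0 < K) :
    let L : ℝ := (1/(1+K)) ^ ((1:ℝ)/3)
    let f : ℝ → ℝ := fun r => (Ifun r)^6 * (1 - (1+K)*r^3)
    (∀ r ∈ Set.Ioo L 1, f r < 0) ∧
      Filter.Tendsto f (nhdsWithin L (Set.Ioi L)) (nhds 0) ∧
      Filter.Tendsto f (nhdsWithin 1 (Set.Iio 1)) (nhds 0) ∧
      (∃ r ∈ Set.Ioo L 1, deriv f r = 0 ∧
        (∀ x ∈ Set.Ioo L 1, deriv f x = 0 → x = r) ∧
        (∀ x ∈ Set.Ioo L 1, f r ≤ f x)) := by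
  intro L f
  have hLdef : L = (1/(1+K)) ^ ((1:ℝ)/3) := rfl
  have hfdef : f = fun r => (Ifun r)^6 * (1 - (1+K)*r^3) := rfl
  have haK : (1:ℝ) < 1 + K := by linarith
  have ha0 : (0:ℝ) < 1 + K := by linarith
  have hbase : (0:ℝ) < 1/(1+K) := by positivity
  have hL0 : 0 < L := by rw [hLdef]; exact Real.rpow_pos_of_pos hbase _
  have hL3 : L^3 = 1/(1+K) := by
    rw [hLdef, ← Real.rpow_natCast ((1/(1+K)) ^ ((1:ℝ)/3)) 3, ← Real.rpow_mul hbase.le]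
    norm_num
  have hL1 : L < 1 := by
    by_contra hcon
    push_neg at hcon
    have h1 : (1:ℝ) ≤ L^3 := by nlinarith [sq_nonneg L, mul_nonneg (sub_nonneg.2 hcon) (sq_nonneg L)]
    rw [hL3, le_div_iff₀ ha0] at h1
    linarith
  have haL : ∀ x : ℝ, L < x → 1 < (1+K) * x^3 := by
    intro x hx
    have h1 : L^3 < x^3 := S17.cube_lt_cube hx
    rw [hL3, div_lt_iff₀ ha0] at h1
    nlinarith
  -- basic positivity facts
  have hIpos : ∀ x : ℝ, 0 < x → x < 1 → 0 < Ifun x := fun x h0 h1 => S17.Ifun_pos h0.le h1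
  have hhneg : ∀ x : ℝ, L < x → 1 - (1+K) * x^3 < 0 := fun x hx => by linarith [haL x hx]
  -- part 1
  have part1 : ∀ r ∈ Set.Ioo L 1, f r < 0 := by
    intro r hr
    exact mul_neg_of_pos_of_neg (pow_pos (hIpos r (hL0.trans hr.1) hr.2) 6) (hhneg r hr.1)
  -- continuity of Ifun within the interval from the right of L
  have hIccL : Set.Icc (0:ℝ) 1 ∈ nhdsWithin L (Set.Ioi L) := by
    have h1 : ∀ᶠ x in nhdsWithin L (Set.Ioi L), x < 1 :=
      (eventually_lt_nhds hL1).filter_mono nhdsWithin_le_nhds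
    have h2 : ∀ᶠ x in nhdsWithin L (Set.Ioi L), x ∈ Set.Ioi L := eventually_mem_nhdsWithin
    filter_upwards [h1, h2] with x hx1 hx2
    exact ⟨(hL0.trans hx2).le, hx1.le⟩
  have hIccOne : Set.Icc (0:ℝ) 1 ∈ nhdsWithin 1 (Set.Iio 1) := by
    have h1 : ∀ᶠ x in nhdsWithin (1:ℝ) (Set.Iio 1), (0:ℝ) < x :=
      (eventually_gt_nhds one_pos).filter_mono nhdsWithin_le_nhds
    have h2 : ∀ᶠ x in nhdsWithin (1:ℝ) (Set.Iio 1), x ∈ Set.Iio 1 := eventually_mem_nhdsWithin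
    filter_upwards [h1, h2] with x hx1 hx2
    exact ⟨hx1.le, le_of_lt hx2⟩
  have hIL : Filter.Tendsto Ifun (nhdsWithin L (Set.Ioi L)) (nhds (Ifun L)) :=
    (S17.Ifun_contOn L ⟨hL0.le, hL1.le⟩).mono_left (nhdsWithin_le_of_mem hIccL)
  have hI1 : Filter.Tendsto Ifun (nhdsWithin 1 (Set.Iio 1)) (nhds 0) := by
    have := (S17.Ifun_contOn 1 ⟨by norm_num, le_refl 1⟩).mono_left (nhdsWithin_le_of_mem hIccOne)
    rwa [S17.Ifun_one] at this
  have hpoly : Continuous (fun r : ℝ => 1 - (1+K) * r^3) := by continuity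
  have part2 : Filter.Tendsto f (nhdsWithin L (Set.Ioi L)) (nhds 0) := by
    have h1 : Filter.Tendsto f (nhdsWithin L (Set.Ioi L))
        (nhds ((Ifun L)^6 * (1 - (1+K)*L^3))) :=
      (hIL.pow 6).mul ((hpoly.tendsto L).mono_left nhdsWithin_le_nhds)
    have h2 : (1:ℝ) - (1+K)*L^3 = 0 := by rw [hL3]; field_simp; norm_num
    rw [h2, mul_zero] at h1
    exact h1
  have part3 : Filter.Tendsto f (nhdsWithin 1 (Set.Iio 1)) (nhds 0) := by
    have h1 : Filter.Tendsto f (nhdsWithin 1 (Set.Iio 1))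
        (nhds ((0:ℝ)^6 * (1 - (1+K)*1^3))) :=
      (hI1.pow 6).mul ((hpoly.tendsto 1).mono_left nhdsWithin_le_nhds)
    norm_num at h1
    exact h1
  -- derivative of f
  have hfd : ∀ x : ℝ, 0 < x → x < 1 → HasDerivAt f
      (3 * (Ifun x)^5 * (2 * S17.Dv x * (1 - (1+K)*x^3) - Ifun x * ((1+K)*x^2))) x := by
    intro x h0 h1
    have h1' : HasDerivAt Ifun (S17.Dv x) x := S17.Ifun_hasDerivAt h0 h1
    have h2' : HasDerivAt (fun r : ℝ => (Ifun r)^6) (6 * (Ifun x)^5 * S17.Dv x) x := by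
      simpa using h1'.fun_pow 6
    have h3' : HasDerivAt (fun r : ℝ => 1 - (1+K)*r^3) (-((1+K) * (3*x^2))) x := by
      have hp : HasDerivAt (fun r : ℝ => r^3) (3*x^2) x := by
        simpa using hasDerivAt_pow 3 x
      simpa using ((hp.const_mul (1+K)).const_sub 1)
    have := h2'.fun_mul h3'
    rw [hfdef]
    refine this.congr_deriv ?_
    ring
  -- the auxiliary function ψ
  set ψ : ℝ → ℝ := fun x => S17.w1 x - S17.w2 (1+K) x with hψdef
  have hψanti : ∀ x ∈ Set.Ioo L 1, ∀ y ∈ Set.Ioo L 1, x < y → ψ y < ψ x := by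
    intro x hx y hy hxy
    have hw1 := S17.w1_lt (hL0.trans hx.1) hxy hy.2
    have hw2 := S17.w2_lt (a := 1+K) (hL0.trans hx.1) hxy (haL x hx.1) (haL y hy.1)
    simp only [hψdef]
    linarith
  -- deriv f in terms of ψ
  have hderiv_eq : ∀ x ∈ Set.Ioo L 1,
      deriv f x = 3 * (Ifun x)^5 * (Ifun x * (1 - (1+K)*x^3) * ψ x) := by
    intro x hx
    have h0x : 0 < x := hL0.trans hx.1
    have hI : 0 < Ifun x := hIpos x h0x hx.2
    have hh : 1 - (1+K)*x^3 < 0 := hhneg x hx.1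
    rw [(hfd x h0x hx.2).deriv]
    congr 1
    have hIne : Ifun x ≠ 0 := hI.ne'
    have hhne : (1 - (1+K)*x^3) ≠ 0 := hh.ne
    have key : Ifun x * (1 - (1+K)*x^3) * ψ x
        = 2 * S17.Dv x * (1 - (1+K)*x^3) - Ifun x * ((1+K)*x^2) := by
      simp only [hψdef, S17.w1, S17.w2]
      field_simp
      try ring
    exact key.symm
  -- midpoint
  set c : ℝ := (L+1)/2 with hc_def
  have hLc : L < c := by rw [hc_def]; linarith
  have hc1 : c < 1 := by rw [hc_def]; linarith
  have hc0 : 0 < c := hL0.trans hLc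
  have hM2neg : S17.w2 (1+K) c < 0 := by
    rw [S17.w2]
    exact div_neg_of_pos_of_neg (by positivity) (hhneg c hLc)
  have hM1neg : S17.w1 c < 0 := by
    rw [S17.w1]
    exact div_neg_of_neg_of_pos (by nlinarith [S17.Dv_neg hc1]) (hIpos c hc0 hc1)
  -- find x₂ near 1 with ψ x₂ < 0
  obtain ⟨x₂, hx₂mem, hx₂lt⟩ : ∃ x, x ∈ Set.Ioo c 1 ∧ ψ x < 0 := by
    have hδ : 0 < 2 * S17.Dv c / S17.w2 (1+K) c :=
      div_pos_of_neg_of_neg (by nlinarith [S17.Dv_neg hc1]) hM2neg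
    have h1 : ∀ᶠ x in nhdsWithin 1 (Set.Iio 1), Ifun x < 2 * S17.Dv c / S17.w2 (1+K) c :=
      hI1.eventually_lt_const hδ
    have h2 : ∀ᶠ x in nhdsWithin (1:ℝ) (Set.Iio 1), c < x :=
      (eventually_gt_nhds hc1).filter_mono nhdsWithin_le_nhds
    have h3 : ∀ᶠ x in nhdsWithin (1:ℝ) (Set.Iio 1), x ∈ Set.Iio 1 := eventually_mem_nhdsWithin
    obtain ⟨x, hxI, hxc, hx1⟩ := (h1.and (h2.and h3)).exists
    have hx1' : x < 1 := hx1
    have hIx : 0 < Ifun x := hIpos x (hc0.trans hxc) hx1'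
    refine ⟨x, ⟨hxc, hx1'⟩, ?_⟩
    have hDlt : S17.Dv x < S17.Dv c := S17.Dv_lt hxc hx1'
    have hw1le : S17.w1 x ≤ 2 * S17.Dv c / Ifun x := by
      rw [S17.w1]
      exact (div_le_div_iff_of_pos_right hIx).2 (by linarith)
    have hlt2 : 2 * S17.Dv c / Ifun x < S17.w2 (1+K) c := by
      rw [div_lt_iff₀ hIx]
      have hcancel : S17.w2 (1+K) c * (2 * S17.Dv c / S17.w2 (1+K) c) = 2 * S17.Dv c := by
        rw [mul_comm]
        exact div_mul_cancel₀ _ hM2neg.ne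
      linarith [mul_lt_mul_of_neg_left hxI hM2neg, hcancel]
    have hw2c : S17.w2 (1+K) c < S17.w2 (1+K) x :=
      S17.w2_lt hc0 hxc (haL c hLc) (haL x (hLc.trans hxc))
    simp only [hψdef]
    linarith
  -- find x₁ near L with ψ x₁ > 0
  obtain ⟨x₁, hx₁mem, hx₁gt⟩ : ∃ x, x ∈ Set.Ioo L c ∧ 0 < ψ x := by
    have htd : Filter.Tendsto (fun x : ℝ => S17.w1 c * (1 - (1+K)*x^3)) (nhds L)
        (nhds (S17.w1 c * (1 - (1+K)*L^3))) := ((continuous_const.mul hpoly).tendsto L)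
    have hval : S17.w1 c * (1 - (1+K)*L^3) = 0 := by
      rw [hL3]; field_simp; simp
    rw [hval] at htd
    have h1 : ∀ᶠ x in nhdsWithin L (Set.Ioi L), S17.w1 c * (1 - (1+K)*x^3) < (1+K)*L^2 :=
      (htd.eventually_lt_const (by positivity)).filter_mono nhdsWithin_le_nhds
    have h2 : ∀ᶠ x in nhdsWithin L (Set.Ioi L), x < c :=
      (eventually_lt_nhds hLc).filter_mono nhdsWithin_le_nhds
    have h3 : ∀ᶠ x in nhdsWithin L (Set.Ioi L), x ∈ Set.Ioi L := eventually_mem_nhdsWithin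
    obtain ⟨x, hxa, hxc, hxL⟩ := (h1.and (h2.and h3)).exists
    have hxL' : L < x := hxL
    have hx0 : 0 < x := hL0.trans hxL'
    have hx1 : x < 1 := hxc.trans hc1
    have hhx : 1 - (1+K)*x^3 < 0 := hhneg x hxL'
    refine ⟨x, ⟨hxL', hxc⟩, ?_⟩
    have hw2lt : S17.w2 (1+K) x < S17.w1 c := by
      rw [S17.w2, div_lt_iff_of_neg hhx]
      have hsq : L^2 < x^2 := by nlinarith
      nlinarith
    have hw1gt : S17.w1 c < S17.w1 x := S17.w1_lt hx0 hxc hc1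
    simp only [hψdef]
    linarith
  -- IVT: find the root r of ψ
  have hx₁x₂ : x₁ < x₂ := hx₁mem.2.trans hx₂mem.1
  have hx₁L : L < x₁ := hx₁mem.1
  have hx₂1 : x₂ < 1 := hx₂mem.2
  have hψcont : ContinuousOn ψ (Set.Icc x₁ x₂) := by
    have hsub : Set.Icc x₁ x₂ ⊆ Set.Icc (0:ℝ) 1 := fun z hz =>
      ⟨(hL0.trans (hx₁L.trans_le hz.1)).le, (hz.2.trans_lt hx₂1).le⟩
    have hDvcont : ContinuousOn S17.Dv (Set.Icc x₁ x₂) := by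
      intro z hz
      exact (continuousAt_const.mul (S17.g_contAt (lt_of_le_of_lt hz.2 hx₂1)).neg).continuousWithinAt
    have hw1cont : ContinuousOn S17.w1 (Set.Icc x₁ x₂) := by
      apply ContinuousOn.div (continuousOn_const.mul hDvcont) (S17.Ifun_contOn.mono hsub)
      intro z hz
      exact (hIpos z (hL0.trans (hx₁L.trans_le hz.1)) (lt_of_le_of_lt hz.2 hx₂1)).ne'
    have hw2cont : ContinuousOn (S17.w2 (1+K)) (Set.Icc x₁ x₂) := by
      apply ContinuousOn.div (by fun_prop) (by fun_prop)
      intro z hz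
      exact (hhneg z (hx₁L.trans_le hz.1)).ne
    rw [hψdef]
    exact hw1cont.sub hw2cont
  have h0mem : (0:ℝ) ∈ Set.Icc (ψ x₂) (ψ x₁) := ⟨hx₂lt.le, hx₁gt.le⟩
  obtain ⟨r, hrmem, hrψ⟩ := intermediate_value_Icc' hx₁x₂.le hψcont h0mem
  have hrI : r ∈ Set.Ioo L 1 := ⟨hx₁L.trans_le hrmem.1, lt_of_le_of_lt hrmem.2 hx₂1⟩
  -- sign of deriv f
  have hsign_neg : ∀ x ∈ Set.Ioo L 1, x < r → deriv f x < 0 := by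
    intro x hx hxr
    have hψx : 0 < ψ x := by
      have := hψanti x hx r hrI hxr
      rw [hrψ] at this
      linarith
    rw [hderiv_eq x hx]
    have hI : 0 < Ifun x := hIpos x (hL0.trans hx.1) hx.2
    have hh : 1 - (1+K)*x^3 < 0 := hhneg x hx.1
    have h5 : 0 < 3 * (Ifun x)^5 := by positivity
    exact mul_neg_of_pos_of_neg h5
      (mul_neg_of_neg_of_pos (mul_neg_of_pos_of_neg hI hh) hψx)
  have hsign_pos : ∀ x ∈ Set.Ioo L 1, r < x → 0 < deriv f x := by
    intro x hx hrx
    have hψx : ψ x < 0 := by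
      have := hψanti r hrI x hx hrx
      rw [hrψ] at this
      linarith
    rw [hderiv_eq x hx]
    have hI : 0 < Ifun x := hIpos x (hL0.trans hx.1) hx.2
    have hh : 1 - (1+K)*x^3 < 0 := hhneg x hx.1
    have h5 : 0 < 3 * (Ifun x)^5 := by positivity
    exact mul_pos h5 (mul_pos_of_neg_of_neg (mul_neg_of_pos_of_neg hI hh) hψx)
  have hderiv_r : deriv f r = 0 := by
    rw [hderiv_eq r hrI, hrψ]
    ring
  -- continuity of f on subintervals
  have hfcont : ∀ s : Set ℝ, s ⊆ Set.Icc 0 1 → ContinuousOn f s := by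
    intro s hs
    rw [hfdef]
    exact ((S17.Ifun_contOn.mono hs).pow 6).mul (hpoly.continuousOn)
  refine ⟨part1, part2, part3, r, hrI, hderiv_r, ?_, ?_⟩
  · -- uniqueness
    intro x hx hdx
    rcases lt_trichotomy x r with h | h | h
    · exact absurd hdx (hsign_neg x hx h).ne
    · exact h
    · exact absurd hdx (hsign_pos x hx h).ne'
  · -- minimality
    intro x hx
    rcases lt_trichotomy x r with h | h | h
    · have hanti : StrictAntiOn f (Set.Icc x r) := by
        apply strictAntiOn_of_deriv_neg (convex_Icc x r)
        · exact hfcont _ (fun z hz => ⟨(hL0.trans (hx.1.trans_le hz.1)).le, (hz.2.trans_lt hrI.2).le⟩)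
        · intro z hz
          rw [interior_Icc] at hz
          exact hsign_neg z ⟨hx.1.trans hz.1, hz.2.trans hrI.2⟩ hz.2
      exact (hanti (Set.left_mem_Icc.2 h.le) (Set.right_mem_Icc.2 h.le) h).le
    · exact le_of_eq (by rw [h])
    · have hmono : StrictMonoOn f (Set.Icc r x) := by
        apply strictMonoOn_of_deriv_pos (convex_Icc r x)
        · exact hfcont _ (fun z hz => ⟨(hL0.trans (hrI.1.trans_le hz.1)).le, (hz.2.trans_lt hx.2).le⟩)
        · intro z hz
          rw [interior_Icc] at hz
          exact hsign_pos z ⟨hrI.1.trans hz.1, hz.2.trans hx.2⟩ hz.1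
      exact (hmono (Set.left_mem_Icc.2 h.le) (Set.right_mem_Icc.2 h.le) h).le
end Part3
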